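/- A type (A) ILP min {cᵀx : Ax = b, x ≥ 0} with fixed real matrix A, b ∈ [b̲,b̄], c ∈ [c̲,c̄] has strongly zero duality gap if and only if either (i) for every sign vector p ∈ {±1}^m the system Ax = b_c + diag(p)·Δ_b, x ≥ 0 is feasible, or (ii) the system Aᵀy ≤ c̲ is feasible. -/

import Mathlib

open Matrix


/-- Optimal value of the primal type-(A) LP `min cᵀx  s.t.  Ax = b, x ≥ 0`. -/
noncomputable def primalValA {m n : ℕ} (A : Matrix (Fin m) (Fin n) ℝ) (b : Fin m → ℝ)
    (c : Fin n → ℝ) : EReal :=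
  sInf ((fun x => ((c ⬝ᵥ x : ℝ) : EReal)) '' {x | A.mulVec x = b ∧ 0 ≤ x})

/-- Optimal value of the dual type-(A) LP `max bᵀy  s.t.  Aᵀy ≤ c`. -/
noncomputable def dualValA {m n : ℕ} (A : Matrix (Fin m) (Fin n) ℝ) (b : Fin m → ℝ)
    (c : Fin n → ℝ) : EReal :=
  sSup ((fun y => ((b ⬝ᵥ y : ℝ) : EReal)) '' {y | Aᵀ.mulVec y ≤ c})


open Finset

lemma farkas_fin : ∀ (n : ℕ) {κ : Type*} [Fintype κ] (a : Fin n → κ → ℝ) (b : κ → ℝ),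
    (∃ x : Fin n → ℝ, 0 ≤ x ∧ ∑ j, x j • a j = b) ∨
    (∃ y : κ → ℝ, (∀ j, 0 ≤ y ⬝ᵥ a j) ∧ y ⬝ᵥ b < 0) := by
  intro n
  induction n with
  | zero =>
    intro κ _ a b
    by_cases hb : b = 0
    · exact Or.inl ⟨0, le_refl _, by simp [hb]⟩
    · refine Or.inr ⟨-b, fun j => absurd j.2 (Nat.not_lt_zero _), ?_⟩
      have hnn : 0 ≤ b ⬝ᵥ b := Finset.sum_nonneg fun i _ => mul_self_nonneg _
      have : 0 < b ⬝ᵥ b := by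
        rcases lt_or_eq_of_le hnn with h | h
        · exact h
        · exact absurd ((dotProduct_self_eq_zero).1 h.symm) hb
      simpa [neg_dotProduct] using neg_neg_iff_pos.2 this
  | succ n ih =>
    intro κ _ a b
    rcases ih (fun j => a j.castSucc) b with ⟨x, hx, hs⟩ | ⟨y, hy, hyb⟩
    · refine Or.inl ⟨Fin.snoc x 0, ?_, ?_⟩
      · intro j
        refine Fin.lastCases ?_ ?_ j <;> simp [Fin.snoc_last, Fin.snoc_castSucc]
        intro i; exact hx i
      · rw [Fin.sum_univ_castSucc]
        simp [Fin.snoc_castSucc, Fin.snoc_last, hs]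
    · set aL := a (Fin.last n) with haL
      by_cases hα : 0 ≤ y ⬝ᵥ aL
      · refine Or.inr ⟨y, ?_, hyb⟩
        intro j
        refine Fin.lastCases ?_ ?_ j
        · exact hα
        · exact hy
      · push_neg at hα
        have hαne : y ⬝ᵥ aL ≠ 0 := ne_of_lt hα
        set α := y ⬝ᵥ aL with hα'
        set a' : Fin n → κ → ℝ := fun j => a j.castSucc - ((y ⬝ᵥ a j.castSucc)/α) • aL with ha'
        set b' : κ → ℝ := b - ((y ⬝ᵥ b)/α) • aL with hb'
        rcases ih a' b' with ⟨x, hx, hs⟩ | ⟨z, hz, hzb⟩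
        · -- construct nonneg solution
          set μ := (y ⬝ᵥ b - ∑ j, x j * (y ⬝ᵥ a j.castSucc))/α with hμ
          have hμ0 : 0 ≤ μ := by
            have h1 : 0 ≤ ∑ j, x j * (y ⬝ᵥ a j.castSucc) :=
              Finset.sum_nonneg fun j _ => mul_nonneg (hx j) (hy j)
            exact le_of_lt (div_pos_of_neg_of_neg (by linarith) hα)
          refine Or.inl ⟨Fin.snoc x μ, ?_, ?_⟩
          · intro j
            refine Fin.lastCases ?_ ?_ j
            · simpa using hμ0
            · intro i; simpa using hx i
          · rw [Fin.sum_univ_castSucc]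
            simp only [Fin.snoc_castSucc, Fin.snoc_last]
            have expand : ∑ j, x j • a j.castSucc
                = b' + (∑ j, x j * ((y ⬝ᵥ a j.castSucc)/α)) • aL := by
              rw [← hs]
              rw [Finset.sum_smul]
              rw [← Finset.sum_add_distrib]
              refine Finset.sum_congr rfl fun j _ => ?_
              rw [ha']
              simp [smul_sub, smul_smul]
            rw [expand, hb']
            have : μ = (y ⬝ᵥ b)/α - ∑ j, x j * ((y ⬝ᵥ a j.castSucc)/α) := by
              rw [hμ, sub_div, Finset.sum_div]
              congr 1
              exact Finset.sum_congr rfl fun j _ => (mul_div_assoc _ _ _)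
            rw [this]
            module
        · -- construct separating vector
          set w := z - ((z ⬝ᵥ aL)/α) • y with hw
          have hdot : ∀ v : κ → ℝ, w ⬝ᵥ v = z ⬝ᵥ v - ((z ⬝ᵥ aL)/α) * (y ⬝ᵥ v) := by
            intro v
            rw [hw, sub_dotProduct, smul_dotProduct]
            simp [smul_eq_mul]
          have hdot' : ∀ j : Fin n, z ⬝ᵥ a' j = z ⬝ᵥ a j.castSucc - ((y ⬝ᵥ a j.castSucc)/α) * (z ⬝ᵥ aL) := by
            intro j
            rw [ha']
            simp only
            rw [dotProduct_sub, dotProduct_smul]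
            simp [smul_eq_mul]
          refine Or.inr ⟨w, ?_, ?_⟩
          · intro j
            refine Fin.lastCases ?_ ?_ j
            · rw [hdot aL]
              rw [div_mul_cancel₀ _ hαne]
              simp
            · intro i
              rw [hdot]
              have := hz i
              rw [hdot' i] at this
              calc (0:ℝ) ≤ z ⬝ᵥ a i.castSucc - ((y ⬝ᵥ a i.castSucc)/α) * (z ⬝ᵥ aL) := this
                _ = z ⬝ᵥ a i.castSucc - ((z ⬝ᵥ aL)/α) * (y ⬝ᵥ a i.castSucc) := by ring
          · rw [hdot b]
            have : z ⬝ᵥ b' = z ⬝ᵥ b - ((y ⬝ᵥ b)/α) * (z ⬝ᵥ aL) := by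
              rw [hb', dotProduct_sub, dotProduct_smul]
              simp [smul_eq_mul]
            rw [this] at hzb
            calc z ⬝ᵥ b - ((z ⬝ᵥ aL)/α) * (y ⬝ᵥ b)
                = z ⬝ᵥ b - ((y ⬝ᵥ b)/α) * (z ⬝ᵥ aL) := by ring
              _ < 0 := hzb

lemma farkas_matrix {κ ι : Type*} [Fintype κ] [Fintype ι] (A : Matrix κ ι ℝ) (b : κ → ℝ) :
    (∃ x : ι → ℝ, 0 ≤ x ∧ A.mulVec x = b) ∨
    (∃ y : κ → ℝ, (∀ j, 0 ≤ Aᵀ.mulVec y j) ∧ b ⬝ᵥ y < 0) := by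
  classical
  let e := Fintype.equivFin ι
  rcases farkas_fin (Fintype.card ι) (fun j i0 => A i0 (e.symm j)) b with
    ⟨x, hx, hs⟩ | ⟨y, hy, hyb⟩
  · refine Or.inl ⟨fun i => x (e i), fun i => hx (e i), ?_⟩
    funext i0
    have h1 := congrFun hs i0
    simp only [Finset.sum_apply, Pi.smul_apply, smul_eq_mul] at h1
    rw [Matrix.mulVec, dotProduct]
    rw [← h1]
    rw [← Equiv.sum_comp e (fun j => x j * A i0 (e.symm j))]
    refine Finset.sum_congr rfl fun i _ => ?_
    rw [Equiv.symm_apply_apply, mul_comm]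
  · refine Or.inr ⟨y, ?_, by rwa [dotProduct_comm]⟩
    intro j
    have := hy (e j)
    rw [Matrix.mulVec, dotProduct]
    rw [dotProduct] at this
    simpa [Matrix.transpose_apply, Equiv.symm_apply_apply, mul_comm] using this

lemma farkas_ineq {κ ι : Type*} [Fintype κ] [Fintype ι] [DecidableEq κ]
    (M : Matrix κ ι ℝ) (h : κ → ℝ) :
    (∃ z : ι → ℝ, M.mulVec z ≤ h) ∨
    (∃ u : κ → ℝ, 0 ≤ u ∧ Mᵀ.mulVec u = 0 ∧ h ⬝ᵥ u < 0) := by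
  classical
  set B : Matrix κ (ι ⊕ ι ⊕ κ) ℝ :=
    fun i => Sum.elim (fun j => M i j)
      (Sum.elim (fun j => -M i j) (fun i' => if i' = i then 1 else 0)) with hB
  rcases farkas_matrix B h with ⟨x, hx, hs⟩ | ⟨y, hy, hyb⟩
  · refine Or.inl ⟨fun j => x (Sum.inl j) - x (Sum.inr (Sum.inl j)), ?_⟩
    intro i
    have h1 := congrFun hs i
    rw [Matrix.mulVec, dotProduct, Fintype.sum_sum_type, Fintype.sum_sum_type] at h1
    simp only [hB, Sum.elim_inl, Sum.elim_inr] at h1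
    have hdelta : ∑ i' : κ, (if i' = i then (1:ℝ) else 0) * x (Sum.inr (Sum.inr i'))
        = x (Sum.inr (Sum.inr i)) := by
      simp [ite_mul, Finset.sum_ite_eq, Finset.sum_ite_eq']
    rw [hdelta] at h1
    have h2 : M.mulVec (fun j => x (Sum.inl j) - x (Sum.inr (Sum.inl j))) i
        = ∑ j, M i j * x (Sum.inl j) + ∑ j, -M i j * x (Sum.inr (Sum.inl j)) := by
      rw [Matrix.mulVec, dotProduct, ← Finset.sum_add_distrib]
      exact Finset.sum_congr rfl fun j _ => by ring
    rw [h2]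
    have h3 : (0:ℝ) ≤ x (Sum.inr (Sum.inr i)) := hx _
    linarith
  · refine Or.inr ⟨y, ?_, ?_, hyb⟩
    · intro i
      have := hy (Sum.inr (Sum.inr i))
      rw [Matrix.mulVec, dotProduct] at this
      simp only [Matrix.transpose_apply] at this
      simp only [hB, Matrix.transpose_apply, Sum.elim_inr] at this
      have hdelta : ∑ i' : κ, (if i = i' then (1:ℝ) else 0) * y i' = y i := by
        simp [ite_mul, Finset.sum_ite_eq, Finset.sum_ite_eq']
      rwa [hdelta] at this
    · funext j
      have h1 := hy (Sum.inl j)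
      have h2 := hy (Sum.inr (Sum.inl j))
      rw [Matrix.mulVec, dotProduct] at h1 h2 ⊢
      simp only [Matrix.transpose_apply] at h1 h2
      simp only [hB, Matrix.transpose_apply, Sum.elim_inl, Sum.elim_inr] at h1 h2
      have : ∑ i, -M i j * y i = -∑ i, M i j * y i := by
        rw [← Finset.sum_neg_distrib]
        exact Finset.sum_congr rfl fun i _ => by ring
      rw [this] at h2
      simp only [Matrix.transpose_apply, Pi.zero_apply]
      linarith

section LP

variable {m n : ℕ} (A : Matrix (Fin m) (Fin n) ℝ)

lemma dot_swap (x : Fin n → ℝ) (y : Fin m → ℝ) :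
    (A.mulVec x) ⬝ᵥ y = x ⬝ᵥ (Aᵀ.mulVec y) := by
  simp only [Matrix.mulVec, dotProduct, Matrix.transpose_apply, Finset.sum_mul,
    Finset.mul_sum]
  rw [Finset.sum_comm]
  exact Finset.sum_congr rfl fun j _ => Finset.sum_congr rfl fun i _ => by ring

lemma weak_dual {b : Fin m → ℝ} {c : Fin n → ℝ} {x : Fin n → ℝ} {y : Fin m → ℝ}
    (hxf : A.mulVec x = b) (hx0 : 0 ≤ x) (hy : Aᵀ.mulVec y ≤ c) :
    b ⬝ᵥ y ≤ c ⬝ᵥ x := by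
  rw [← hxf, dot_swap]
  rw [dotProduct_comm c x]
  exact Finset.sum_le_sum fun j _ => mul_le_mul_of_nonneg_left (hy j) (hx0 j)

lemma strong_dual {b : Fin m → ℝ} {c : Fin n → ℝ} {x0 : Fin n → ℝ} {y0 : Fin m → ℝ}
    (hx0f : A.mulVec x0 = b) (hx00 : 0 ≤ x0) (hy0 : Aᵀ.mulVec y0 ≤ c) :
    ∃ x y, A.mulVec x = b ∧ 0 ≤ x ∧ Aᵀ.mulVec y ≤ c ∧ c ⬝ᵥ x ≤ b ⬝ᵥ y := by
  classical
  set M : Matrix ((Fin m ⊕ Fin m) ⊕ ((Fin n ⊕ Fin n) ⊕ Unit)) (Fin n ⊕ Fin m) ℝ :=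
    Sum.elim
      (Sum.elim (fun i => Sum.elim (fun j => A i j) 0)
                (fun i => Sum.elim (fun j => -A i j) 0))
      (Sum.elim (Sum.elim (fun j' => Sum.elim (fun j => if j' = j then -1 else 0) 0)
                          (fun j' => Sum.elim 0 (fun k => A k j')))
                (fun _ => Sum.elim c (fun k => -b k))) with hM
  set h : (Fin m ⊕ Fin m) ⊕ ((Fin n ⊕ Fin n) ⊕ Unit) → ℝ :=
    Sum.elim (Sum.elim b (fun i => -b i))
      (Sum.elim (Sum.elim 0 c) 0) with hh
  have dot_split : ∀ (f : Fin n → ℝ) (g : Fin m → ℝ) (z : Fin n ⊕ Fin m → ℝ),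
      Sum.elim f g ⬝ᵥ z = f ⬝ᵥ (fun j => z (Sum.inl j)) + g ⬝ᵥ (fun k => z (Sum.inr k)) := by
    intro f g z
    rw [dotProduct, Fintype.sum_sum_type]
    rfl
  rcases farkas_ineq M h with ⟨z, hz⟩ | ⟨u, hu0, hueq, huh⟩
  · set x : Fin n → ℝ := fun j => z (Sum.inl j) with hx
    set y : Fin m → ℝ := fun k => z (Sum.inr k) with hy
    have e1 : ∀ i, A.mulVec x i ≤ b i := by
      intro i
      have := hz (Sum.inl (Sum.inl i))
      rw [Matrix.mulVec] at this
      simp only [hM, hh, Sum.elim_inl] at this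
      rw [dot_split] at this
      simpa [Matrix.mulVec] using this
    have e2 : ∀ i, b i ≤ A.mulVec x i := by
      intro i
      have := hz (Sum.inl (Sum.inr i))
      rw [Matrix.mulVec] at this
      simp only [hM, hh, Sum.elim_inl, Sum.elim_inr] at this
      rw [dot_split] at this
      simp only [zero_dotProduct, add_zero] at this
      have h6 : ((fun j => -A i j) ⬝ᵥ fun j => z (Sum.inl j))
          = -((fun j => A i j) ⬝ᵥ fun j => z (Sum.inl j)) := by
        simp [dotProduct, neg_mul, Finset.sum_neg_distrib]
      rw [h6] at this
      have h7 : A.mulVec x i = (fun j => A i j) ⬝ᵥ fun j => z (Sum.inl j) := rfl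
      rw [h7]
      linarith
    have e3 : 0 ≤ x := by
      intro j'
      have := hz (Sum.inr (Sum.inl (Sum.inl j')))
      rw [Matrix.mulVec] at this
      simp only [hM, hh, Sum.elim_inl, Sum.elim_inr] at this
      rw [dot_split] at this
      simp only [zero_dotProduct, add_zero, Pi.zero_apply] at this
      have hd : (fun j => if j' = j then (-1:ℝ) else 0) ⬝ᵥ x = -x j' := by
        simp [dotProduct, ite_mul, Finset.sum_ite_eq, Finset.sum_ite_eq']
      rw [hd] at this
      simpa using this
    have e4 : ∀ j', Aᵀ.mulVec y j' ≤ c j' := by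
      intro j'
      have := hz (Sum.inr (Sum.inl (Sum.inr j')))
      rw [Matrix.mulVec] at this
      simp only [hM, hh, Sum.elim_inl, Sum.elim_inr] at this
      rw [dot_split] at this
      simp only [zero_dotProduct, zero_add] at this
      simpa [Matrix.mulVec, Matrix.transpose_apply] using this
    have e5 : c ⬝ᵥ x ≤ b ⬝ᵥ y := by
      have := hz (Sum.inr (Sum.inr ()))
      rw [Matrix.mulVec] at this
      simp only [hM, hh, Sum.elim_inr] at this
      rw [dot_split] at this
      simp only [Pi.zero_apply, neg_dotProduct] at this
      have h2 : c ⬝ᵥ x + (fun k => -b k) ⬝ᵥ y ≤ 0 := this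
      have h3 : (fun k => -b k) ⬝ᵥ y = -(b ⬝ᵥ y) := by
        simp [dotProduct, Finset.sum_neg_distrib, neg_mul]
      rw [h3] at h2
      linarith
    exact ⟨x, y, funext fun i => le_antisymm (e1 i) (e2 i), e3, e4, e5⟩
  · -- derive contradiction
    exfalso
    set p : Fin m → ℝ := fun i => u (Sum.inl (Sum.inl i)) with hp
    set q : Fin m → ℝ := fun i => u (Sum.inl (Sum.inr i)) with hq
    set r : Fin n → ℝ := fun j => u (Sum.inr (Sum.inl (Sum.inl j))) with hr
    set s : Fin n → ℝ := fun j => u (Sum.inr (Sum.inl (Sum.inr j))) with hs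
    set t : ℝ := u (Sum.inr (Sum.inr ())) with ht
    have ht0 : 0 ≤ t := hu0 _
    have hs0 : 0 ≤ s := fun j => hu0 _
    -- column equations
    have col : ∀ w, (∑ ρ', M ρ' w * u ρ') = 0 := by
      intro w
      have := congrFun hueq w
      rw [Matrix.mulVec, dotProduct] at this
      simpa [Matrix.transpose_apply] using this
    have colx : ∀ j, Aᵀ.mulVec p j - Aᵀ.mulVec q j - r j + t * c j = 0 := by
      intro j
      have := col (Sum.inl j)
      rw [Fintype.sum_sum_type, Fintype.sum_sum_type, Fintype.sum_sum_type,
        Fintype.sum_sum_type] at this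
      simp only [hM, Sum.elim_inl, Sum.elim_inr, Pi.zero_apply, zero_mul,
        Finset.sum_const_zero, add_zero, zero_add, Finset.univ_unique,
        Finset.sum_singleton] at this
      have hd : ∑ j', (if j' = j then (-1:ℝ) else 0) * u (Sum.inr (Sum.inl (Sum.inl j')))
          = -r j := by
        simp [ite_mul, Finset.sum_ite_eq, Finset.sum_ite_eq', hr]
      have h1 : ∑ i, A i j * u (Sum.inl (Sum.inl i)) = Aᵀ.mulVec p j := by
        simp [Matrix.mulVec, dotProduct, Matrix.transpose_apply, hp]
      have h2 : ∑ i, -A i j * u (Sum.inl (Sum.inr i)) = -(Aᵀ.mulVec q j) := by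
        simp [Matrix.mulVec, dotProduct, Matrix.transpose_apply, hq, neg_mul,
          Finset.sum_neg_distrib]
      rw [hd, h1, h2] at this
      rw [ht]
      linarith [this]
    have coly : ∀ k, A.mulVec s k = t * b k := by
      intro k
      have := col (Sum.inr k)
      rw [Fintype.sum_sum_type, Fintype.sum_sum_type, Fintype.sum_sum_type,
        Fintype.sum_sum_type] at this
      simp only [hM, Sum.elim_inl, Sum.elim_inr] at this
      simp only [Pi.zero_apply, zero_mul, Finset.sum_const_zero, zero_add,
        Finset.univ_unique, Finset.sum_singleton] at this
      have h1 : ∑ j', A k j' * u (Sum.inr (Sum.inl (Sum.inr j'))) = A.mulVec s k := by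
        simp [Matrix.mulVec, dotProduct, hs]
      rw [h1] at this
      rw [ht]
      linarith [this]
    have hobj : b ⬝ᵥ p - b ⬝ᵥ q + c ⬝ᵥ s < 0 := by
      rw [dotProduct] at huh
      rw [Fintype.sum_sum_type, Fintype.sum_sum_type, Fintype.sum_sum_type,
        Fintype.sum_sum_type] at huh
      simp only [hh, Sum.elim_inl, Sum.elim_inr, Pi.zero_apply, zero_mul,
        Finset.sum_const_zero, add_zero, Finset.univ_unique, Finset.sum_singleton] at huh
      have h1 : ∑ i, b i * u (Sum.inl (Sum.inl i)) = b ⬝ᵥ p := by simp [dotProduct, hp]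
      have h2 : ∑ i, -b i * u (Sum.inl (Sum.inr i)) = -(b ⬝ᵥ q) := by
        simp [dotProduct, hq, Finset.sum_neg_distrib, neg_mul]
      have h3 : ∑ j, c j * u (Sum.inr (Sum.inl (Sum.inr j))) = c ⬝ᵥ s := by
        simp [dotProduct, hs]
      rw [h1, h2, h3] at huh
      linarith
    by_cases htz : t = 0
    · -- t = 0 case
      have hAs : A.mulVec s = 0 := funext fun k => by rw [coly k, htz, zero_mul]; rfl
      have hr0 : ∀ j, Aᵀ.mulVec (p - q) j = r j := by
        intro j
        rw [Matrix.mulVec_sub]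
        have := colx j
        rw [htz, zero_mul] at this
        simp only [Pi.sub_apply]
        linarith
      have h1 : 0 ≤ b ⬝ᵥ (p - q) := by
        rw [← hx0f, dot_swap]
        apply Finset.sum_nonneg
        intro j _
        have h8 : (0:ℝ) ≤ r j := hu0 _
        exact mul_nonneg (hx00 j) (by rw [hr0 j]; exact h8)
      have h2 : 0 ≤ c ⬝ᵥ s := by
        have : (Aᵀ.mulVec y0) ⬝ᵥ s ≤ c ⬝ᵥ s :=
          Finset.sum_le_sum fun j _ => mul_le_mul_of_nonneg_right (hy0 j) (hs0 j)
        have h4 : (Aᵀ.mulVec y0) ⬝ᵥ s = y0 ⬝ᵥ (A.mulVec s) := by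
          rw [dotProduct_comm (Aᵀ.mulVec y0) s, ← dot_swap A s y0,
            dotProduct_comm]
        rw [h4, hAs] at this
        simpa using this
      have h5 : b ⬝ᵥ (p - q) = b ⬝ᵥ p - b ⬝ᵥ q := dotProduct_sub b p q
      linarith
    · have htpos : 0 < t := lt_of_le_of_ne ht0 (Ne.symm htz)
      set x' : Fin n → ℝ := t⁻¹ • s with hx'
      set y' : Fin m → ℝ := (-t⁻¹) • (p - q) with hy'
      have hx'f : A.mulVec x' = b := by
        funext k
        rw [hx', Matrix.mulVec_smul]
        simp only [Pi.smul_apply, smul_eq_mul]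
        rw [coly k]
        field_simp
      have hx'0 : 0 ≤ x' := fun j => by
        simp only [hx', Pi.smul_apply, smul_eq_mul]
        exact mul_nonneg (inv_nonneg.2 ht0) (hs0 j)
      have hy'f : Aᵀ.mulVec y' ≤ c := by
        intro j
        rw [hy', Matrix.mulVec_smul]
        simp only [Pi.smul_apply, smul_eq_mul]
        rw [Matrix.mulVec_sub]
        have hcx := colx j
        have hrj : 0 ≤ r j := hu0 _
        simp only [Pi.sub_apply]
        have hAB : Aᵀ.mulVec p j - Aᵀ.mulVec q j = r j - t * c j := by linarith
        rw [hAB]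
        rw [neg_mul]
        have : t⁻¹ * (r j - t * c j) = t⁻¹ * r j - c j := by field_simp
        rw [this]
        have : 0 ≤ t⁻¹ * r j := mul_nonneg (inv_nonneg.2 ht0) hrj
        linarith
      have hwd := weak_dual A hx'f hx'0 hy'f
      -- b ⬝ᵥ y' ≤ c ⬝ᵥ x'
      have hby' : b ⬝ᵥ y' = -t⁻¹ * (b ⬝ᵥ p - b ⬝ᵥ q) := by
        rw [hy', dotProduct_smul]
        rw [dotProduct_sub]
        simp [smul_eq_mul]
      have hcx' : c ⬝ᵥ x' = t⁻¹ * (c ⬝ᵥ s) := by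
        rw [hx', dotProduct_smul]
        simp [smul_eq_mul]
      rw [hby', hcx'] at hwd
      have hti : 0 < t⁻¹ := inv_pos.2 htpos
      nlinarith [hwd, hobj, hti]

end LP

section VL

variable {m n : ℕ} (A : Matrix (Fin m) (Fin n) ℝ) (b : Fin m → ℝ) (c : Fin n → ℝ)

lemma val_eq_of_both (hP : ∃ x, A.mulVec x = b ∧ 0 ≤ x) (hD : ∃ y, Aᵀ.mulVec y ≤ c) :
    primalValA A b c = dualValA A b c := by
  obtain ⟨x0, hx0f, hx00⟩ := hP
  obtain ⟨y0, hy0⟩ := hD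
  obtain ⟨x, y, hxf, hx0, hy, hxy⟩ := strong_dual A hx0f hx00 hy0
  apply le_antisymm
  · calc primalValA A b c ≤ ((c ⬝ᵥ x : ℝ) : EReal) :=
        sInf_le ⟨x, ⟨hxf, hx0⟩, rfl⟩
      _ ≤ ((b ⬝ᵥ y : ℝ) : EReal) := by exact_mod_cast hxy
      _ ≤ dualValA A b c := le_sSup ⟨y, hy, rfl⟩
  · apply sSup_le
    rintro v ⟨y', hy', rfl⟩
    apply le_sInf
    rintro w ⟨x', ⟨hx'f, hx'0⟩, rfl⟩
    show ((b ⬝ᵥ y' : ℝ) : EReal) ≤ ((c ⬝ᵥ x' : ℝ) : EReal)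
    exact_mod_cast weak_dual A hx'f hx'0 hy'

lemma dual_top_of_primal_empty (hP : ¬ ∃ x, A.mulVec x = b ∧ 0 ≤ x)
    (hD : ∃ y, Aᵀ.mulVec y ≤ c) : dualValA A b c = ⊤ := by
  obtain ⟨y0, hy0⟩ := hD
  have hray : ∃ y1 : Fin m → ℝ, (∀ j, 0 ≤ Aᵀ.mulVec y1 j) ∧ b ⬝ᵥ y1 < 0 := by
    rcases farkas_matrix A b with ⟨x, hx0, hxf⟩ | h
    · exact absurd ⟨x, hxf, hx0⟩ hP
    · exact h
  obtain ⟨y1, hy1, hby1⟩ := hray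
  rw [dualValA, sSup_eq_top]
  intro w hw
  have key : ∀ τ : ℝ, 0 ≤ τ →
      ((fun v => ((b ⬝ᵥ v : ℝ) : EReal)) '' {y | Aᵀ.mulVec y ≤ c}).Nonempty ∧
      (((b ⬝ᵥ y0 - τ * (b ⬝ᵥ y1) : ℝ) : EReal) ∈
        (fun v => ((b ⬝ᵥ v : ℝ) : EReal)) '' {y | Aᵀ.mulVec y ≤ c}) := by
    intro τ hτ
    have hfeas : Aᵀ.mulVec (y0 - τ • y1) ≤ c := by
      intro j
      rw [Matrix.mulVec_sub, Matrix.mulVec_smul]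
      simp only [Pi.sub_apply, Pi.smul_apply, smul_eq_mul]
      have := mul_nonneg hτ (hy1 j)
      have := hy0 j
      linarith
    refine ⟨⟨_, ⟨y0 - τ • y1, hfeas, rfl⟩⟩, ⟨y0 - τ • y1, hfeas, ?_⟩⟩
    have hdd : b ⬝ᵥ (y0 - τ • y1) = b ⬝ᵥ y0 - τ * (b ⬝ᵥ y1) := by
      rw [dotProduct_sub, dotProduct_smul]
      simp [smul_eq_mul]
    show ((b ⬝ᵥ (y0 - τ • y1) : ℝ) : EReal) = _
    rw [hdd]
  induction w with
  | bot =>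
    obtain ⟨_, hmem⟩ := key 0 le_rfl
    exact ⟨_, hmem, EReal.bot_lt_coe _⟩
  | coe r =>
    set τ := max 0 ((r + 1 - b ⬝ᵥ y0) / (-(b ⬝ᵥ y1))) with hτdef
    have hτ0 : 0 ≤ τ := le_max_left _ _
    obtain ⟨_, hmem⟩ := key τ hτ0
    refine ⟨_, hmem, ?_⟩
    rw [EReal.coe_lt_coe_iff]
    have hpos : 0 < -(b ⬝ᵥ y1) := by linarith
    have h1 : (r + 1 - b ⬝ᵥ y0) / (-(b ⬝ᵥ y1)) ≤ τ := le_max_right _ _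
    have h2 : r + 1 - b ⬝ᵥ y0 ≤ τ * (-(b ⬝ᵥ y1)) := by
      rwa [div_le_iff₀ hpos] at h1
    nlinarith
  | top => exact absurd hw (lt_irrefl _)

lemma primal_bot_of_dual_empty (hP : ∃ x, A.mulVec x = b ∧ 0 ≤ x)
    (hD : ¬ ∃ y, Aᵀ.mulVec y ≤ c) : primalValA A b c = ⊥ := by
  obtain ⟨x0, hx0f, hx00⟩ := hP
  have hray : ∃ u : Fin n → ℝ, 0 ≤ u ∧ A.mulVec u = 0 ∧ c ⬝ᵥ u < 0 := by
    rcases farkas_ineq Aᵀ c with ⟨z, hz⟩ | ⟨u, hu0, hueq, huc⟩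
    · exact absurd ⟨z, hz⟩ hD
    · refine ⟨u, hu0, ?_, huc⟩
      rwa [Matrix.transpose_transpose] at hueq
  obtain ⟨u, hu0, huf, hcu⟩ := hray
  rw [primalValA, sInf_eq_bot]
  intro w hw
  have key : ∀ τ : ℝ, 0 ≤ τ →
      (((c ⬝ᵥ x0 + τ * (c ⬝ᵥ u) : ℝ) : EReal) ∈
        (fun v => ((c ⬝ᵥ v : ℝ) : EReal)) '' {x | A.mulVec x = b ∧ 0 ≤ x}) := by
    intro τ hτ
    refine ⟨x0 + τ • u, ⟨?_, ?_⟩, ?_⟩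
    · rw [Matrix.mulVec_add, Matrix.mulVec_smul, huf, hx0f]
      simp
    · intro j
      simp only [Pi.add_apply, Pi.smul_apply, smul_eq_mul, Pi.zero_apply]
      have h9 : 0 ≤ τ * u j := mul_nonneg hτ (hu0 j)
      have h10 : (0:ℝ) ≤ x0 j := hx00 j
      linarith
    · have hdd : c ⬝ᵥ (x0 + τ • u) = c ⬝ᵥ x0 + τ * (c ⬝ᵥ u) := by
        rw [dotProduct_add, dotProduct_smul]
        simp [smul_eq_mul]
      show ((c ⬝ᵥ (x0 + τ • u) : ℝ) : EReal) = _
      rw [hdd]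
  induction w with
  | bot => exact absurd hw (lt_irrefl _)
  | coe r =>
    set τ := max 0 ((r - 1 - c ⬝ᵥ x0) / (c ⬝ᵥ u)) with hτdef
    have hτ0 : 0 ≤ τ := le_max_left _ _
    refine ⟨_, key τ hτ0, ?_⟩
    rw [EReal.coe_lt_coe_iff]
    have hneg : c ⬝ᵥ u < 0 := hcu
    have h1 : (r - 1 - c ⬝ᵥ x0) / (c ⬝ᵥ u) ≤ τ := le_max_right _ _
    have h2 : τ * (c ⬝ᵥ u) ≤ r - 1 - c ⬝ᵥ x0 := by
      rwa [div_le_iff_of_neg hneg] at h1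
    nlinarith
  | top =>
    refine ⟨_, key 0 le_rfl, ?_⟩
    exact EReal.coe_lt_top _

end VL

lemma box_feasible {m n : ℕ} (A : Matrix (Fin m) (Fin n) ℝ) (bL bU : Fin m → ℝ)
    (hb : bL ≤ bU)
    (hvert : ∀ p : Fin m → ℝ, (∀ i, p i = 1 ∨ p i = -1) →
      ∃ x, A.mulVec x = (fun i => (bL i + bU i) / 2 + p i * ((bU i - bL i) / 2)) ∧ 0 ≤ x)
    (b : Fin m → ℝ) (hbl : bL ≤ b) (hbu : b ≤ bU) :
    ∃ x, A.mulVec x = b ∧ 0 ≤ x := by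
  classical
  suffices H : ∀ S : Finset (Fin m), ∀ b : Fin m → ℝ, bL ≤ b → b ≤ bU →
      (∀ i, i ∉ S → b i = bL i ∨ b i = bU i) → ∃ x, A.mulVec x = b ∧ 0 ≤ x by
    exact H Finset.univ b hbl hbu (fun i hi => absurd (Finset.mem_univ i) hi)
  intro S
  induction S using Finset.induction_on with
  | empty =>
    intro b hbl hbu hout
    set p : Fin m → ℝ := fun i => if b i = bU i then 1 else -1 with hp
    obtain ⟨x, hx, hx0⟩ := hvert p (fun i => by by_cases h : b i = bU i <;> simp [hp, h])
    refine ⟨x, ?_, hx0⟩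
    rw [hx]
    funext i
    by_cases h : b i = bU i
    · simp only [hp, if_pos h]
      rw [h]; ring
    · have hbi : b i = bL i := (hout i (Finset.notMem_empty i)).resolve_right h
      simp only [hp, if_neg h]
      rw [hbi]; ring
  | @insert a S ha ih =>
    intro b hbl hbu hout
    by_cases hE : bU a = bL a
    · have hba : b a = bL a := le_antisymm (hE ▸ hbu a) (hbl a)
      apply ih b hbl hbu
      intro i hi
      by_cases hia : i = a
      · rw [hia]; exact Or.inl hba
      · exact hout i (by simp [hia, hi])
    · have hlt : bL a < bU a := lt_of_le_of_ne (hb a) (Ne.symm hE)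
      set b0 := Function.update b a (bL a) with hb0
      set b1 := Function.update b a (bU a) with hb1
      have hb0l : bL ≤ b0 := by
        intro i
        by_cases hia : i = a
        · rw [hia, hb0, Function.update_self]
        · rw [hb0, Function.update_of_ne hia]; exact hbl i
      have hb0u : b0 ≤ bU := by
        intro i
        by_cases hia : i = a
        · rw [hia, hb0, Function.update_self]; exact hb a
        · rw [hb0, Function.update_of_ne hia]; exact hbu i
      have hb1l : bL ≤ b1 := by
        intro i
        by_cases hia : i = a
        · rw [hia, hb1, Function.update_self]; exact hb a
        · rw [hb1, Function.update_of_ne hia]; exact hbl i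
      have hb1u : b1 ≤ bU := by
        intro i
        by_cases hia : i = a
        · rw [hia, hb1, Function.update_self]
        · rw [hb1, Function.update_of_ne hia]; exact hbu i
      have hout0 : ∀ i, i ∉ S → b0 i = bL i ∨ b0 i = bU i := by
        intro i hi
        by_cases hia : i = a
        · rw [hia, hb0, Function.update_self]; exact Or.inl rfl
        · rw [hb0, Function.update_of_ne hia]
          exact hout i (by simp [hia, hi])
      have hout1 : ∀ i, i ∉ S → b1 i = bL i ∨ b1 i = bU i := by
        intro i hi
        by_cases hia : i = a
        · rw [hia, hb1, Function.update_self]; exact Or.inr rfl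
        · rw [hb1, Function.update_of_ne hia]
          exact hout i (by simp [hia, hi])
      obtain ⟨x0, hx0f, hx00⟩ := ih b0 hb0l hb0u hout0
      obtain ⟨x1, hx1f, hx10⟩ := ih b1 hb1l hb1u hout1
      set τ := (b a - bL a) / (bU a - bL a) with hτ
      have hd : 0 < bU a - bL a := by linarith
      have hτ0 : 0 ≤ τ := div_nonneg (by linarith [hbl a]) (le_of_lt hd)
      have hτ1 : τ ≤ 1 := by
        rw [hτ, div_le_one hd]
        linarith [hbu a]
      refine ⟨(1 - τ) • x0 + τ • x1, ?_, ?_⟩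
      · rw [Matrix.mulVec_add, Matrix.mulVec_smul, Matrix.mulVec_smul, hx0f, hx1f]
        funext i
        simp only [Pi.add_apply, Pi.smul_apply, smul_eq_mul]
        by_cases hia : i = a
        · rw [hia, hb0, hb1, Function.update_self, Function.update_self]
          have : τ * (bU a - bL a) = b a - bL a := by
            rw [hτ, div_mul_cancel₀ _ (ne_of_gt hd)]
          nlinarith [this]
        · rw [hb0, hb1, Function.update_of_ne hia, Function.update_of_ne hia]
          ring
      · intro j
        simp only [Pi.add_apply, Pi.smul_apply, smul_eq_mul, Pi.zero_apply]
        have := mul_nonneg (by linarith : (0:ℝ) ≤ 1 - τ) (hx00 j)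
        have := mul_nonneg hτ0 (hx10 j)
        linarith


/-- A type (A) ILP with fixed matrix has strongly zero duality gap iff
(i) `Ax = b_c + diag(p)·Δ_b, x ≥ 0` is feasible for every sign vector `p`, or
(ii) `Aᵀy ≤ c̲` is feasible. -/
theorem typeA_degenerate_strongly_zero_dg_iff {m n : ℕ}
    (A : Matrix (Fin m) (Fin n) ℝ) (bL bU : Fin m → ℝ) (cL cU : Fin n → ℝ)
    (hb : bL ≤ bU) (hc : cL ≤ cU) :
    (∀ b c, bL ≤ b → b ≤ bU → cL ≤ c → c ≤ cU →
        primalValA A b c = dualValA A b c) ↔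
      ((∀ p : Fin m → ℝ, (∀ i, p i = 1 ∨ p i = -1) →
          ∃ x : Fin n → ℝ,
            A.mulVec x = (fun i => (bL i + bU i) / 2 + p i * ((bU i - bL i) / 2)) ∧ 0 ≤ x) ∨
       (∃ y : Fin m → ℝ, Aᵀ.mulVec y ≤ cL)) := by
  constructor
  · intro heq
    by_cases hD : ∃ y, Aᵀ.mulVec y ≤ cL
    · exact Or.inr hD
    · left
      intro p hp
      set bp : Fin m → ℝ := fun i => (bL i + bU i) / 2 + p i * ((bU i - bL i) / 2) with hbp
      have hbpl : bL ≤ bp := by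
        intro i
        rcases hp i with h | h <;> rw [hbp] <;> simp only [h] <;> nlinarith [hb i]
      have hbpu : bp ≤ bU := by
        intro i
        rcases hp i with h | h <;> rw [hbp] <;> simp only [h] <;> nlinarith [hb i]
      have hval := heq bp cL hbpl hbpu le_rfl hc
      by_contra hP
      have h1 : primalValA A bp cL = ⊤ := by
        rw [primalValA]
        have hempty : {x : Fin n → ℝ | A.mulVec x = bp ∧ 0 ≤ x} = ∅ := by
          rw [Set.eq_empty_iff_forall_notMem]
          intro x hx
          exact hP ⟨x, hx.1, hx.2⟩
        rw [hempty, Set.image_empty, sInf_empty]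
      have h2 : dualValA A bp cL = ⊥ := by
        rw [dualValA]
        have hempty : {y : Fin m → ℝ | Aᵀ.mulVec y ≤ cL} = ∅ := by
          rw [Set.eq_empty_iff_forall_notMem]
          intro y hy
          exact hD ⟨y, hy⟩
        rw [hempty, Set.image_empty, sSup_empty]
      rw [h1, h2] at hval
      simp at hval
  · intro h b c hbl hbu hcl hcu
    by_cases hP : ∃ x, A.mulVec x = b ∧ 0 ≤ x
    · by_cases hD : ∃ y, Aᵀ.mulVec y ≤ c
      · exact val_eq_of_both A b c hP hD
      · rw [primal_bot_of_dual_empty A b c hP hD]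
        rw [dualValA]
        have hempty : {y : Fin m → ℝ | Aᵀ.mulVec y ≤ c} = ∅ := by
          rw [Set.eq_empty_iff_forall_notMem]
          intro y hy
          exact hD ⟨y, hy⟩
        rw [hempty, Set.image_empty, sSup_empty]
    · have hD : ∃ y, Aᵀ.mulVec y ≤ c := by
        rcases h with hi | ⟨y, hy⟩
        · exact absurd (box_feasible A bL bU hb hi b hbl hbu) hP
        · exact ⟨y, le_trans hy hcl⟩
      rw [dual_top_of_primal_empty A b c hP hD]
      rw [primalValA]
      have hempty : {x : Fin n → ℝ | A.mulVec x = b ∧ 0 ≤ x} = ∅ := by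
        rw [Set.eq_empty_iff_forall_notMem]
        intro x hx
        exact hP ⟨x, hx.1, hx.2⟩
      rw [hempty, Set.image_empty, sInf_empty]
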